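/- Let K ⊆ ℝⁿ be a compact set and X ⊆ K a finite nonempty set whose vanishing ideal I(X) ⊆ ℝ[x₁,…,x_n] is generated by polynomials of total degree at most g. Let d ≥ 2g, let τ be a probability measure on K, let φ₁,…,φ_T be a basis of the polynomials of degree at most d that is orthonormal in L²(τ), let μ be a positive discrete measure supported on X, let ε ∈ ℝ^T with ‖ε‖₂ ≤ δ and y_i := ∫_K φ_i dμ + ε_i. Then there exist constants C_a > 0 and 0 < C_b < 1, depending only on X (and K and the generators) and not on μ, δ, ε, such that, setting c₀ := √(C_b/C_a), every discrete signed measure Δ̂ = Σ_z Δ̂(z) δ_z attaining the minimum of ‖ν‖_TV over all finite signed Borel measures ν with ‖(∫_K φ_i dν − y_i)_i‖₂ ≤ δ satisfies: (1) every z with Δ̂(z) > 2δ/C_b has d(z,X) ≤ c₀; (2) Σ_{z : d(z,X) ≤ c₀, Δ̂(z) > 0} Δ̂(z)·d(z,X)² ≤ 2δ/C_a, Σ_{z : d(z,X) ≥ c₀, Δ̂(z) > 0} Δ̂(z) ≤ 2δ/C_b, and Σ_{z : Δ̂(z) < 0} |Δ̂(z)| ≤ 2δ. -/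

import Mathlib

open MeasureTheory

noncomputable section

/-- Evaluation of a multivariate polynomial at a point of Euclidean space. -/
noncomputable def peval {n : ℕ} (f : MvPolynomial (Fin n) ℝ) (z : EuclideanSpace ℝ (Fin n)) : ℝ :=
  MvPolynomial.eval (fun j => z j) f

/-- Integration of a real function against a finite signed Borel measure,
via the Jordan decomposition `ν = ν₊ − ν₋`. -/
noncomputable def sint {α : Type*} [MeasurableSpace α] (ν : SignedMeasure α) (f : α → ℝ) : ℝ :=
  ∫ x, f x ∂ν.toJordanDecomposition.posPart - ∫ x, f x ∂ν.toJordanDecomposition.negPart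

/-- The total variation norm `‖ν‖_TV = ν₊(K) + ν₋(K)` of a finite signed measure. -/
noncomputable def tvNorm {α : Type*} [MeasurableSpace α] (ν : SignedMeasure α) : ℝ :=
  (ν.totalVariation Set.univ).toReal

/-- The discrete signed measure `Σ_{z ∈ Z} w z · δ_z`. -/
noncomputable def discSM {n : ℕ} (Z : Finset (EuclideanSpace ℝ (Fin n)))
    (w : EuclideanSpace ℝ (Fin n) → ℝ) : SignedMeasure (EuclideanSpace ℝ (Fin n)) :=
  ∑ z ∈ Z, w z • (Measure.dirac z).toSignedMeasure

/-- Feasibility for the BLASSO problem: `ν` is a signed measure on `K` whose moment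
vector against `φ` is within `δ` of `y` in the Euclidean norm. -/
def BlassoFeasible {n T : ℕ} (K : Set (EuclideanSpace ℝ (Fin n)))
    (φ : Fin T → MvPolynomial (Fin n) ℝ) (y : Fin T → ℝ) (δ : ℝ)
    (ν : SignedMeasure (EuclideanSpace ℝ (Fin n))) : Prop :=
  ν.totalVariation Kᶜ = 0 ∧ Real.sqrt (∑ i, (sint ν (peval (φ i)) - y i) ^ 2) ≤ δ


open scoped Classical

section AuxLemmas
set_option linter.unusedSectionVars false


set_option linter.unusedSectionVars false

variable {α : Type*} [MeasurableSpace α] [MeasurableSingletonClass α]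

lemma integrable_dirac'' (f : α → ℝ) (z : α) : Integrable f (Measure.dirac z) := by
  have h : f =ᵐ[Measure.dirac z] fun _ => f z := by
    rw [MeasureTheory.ae_dirac_eq]; exact Filter.eventually_pure.2 rfl
  exact (integrable_const (f z)).congr h.symm

noncomputable def posM (Z : Finset α) (w : α → ℝ) : Measure α :=
  ∑ z ∈ Z, ENNReal.ofReal (w z) • Measure.dirac z

instance (Z : Finset α) (w : α → ℝ) : IsFiniteMeasure (posM Z w) := by
  constructor
  simp only [posM, Measure.finset_sum_apply, Measure.smul_apply, smul_eq_mul]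
  refine (ENNReal.sum_lt_top.2 fun z _ => ?_)
  exact ENNReal.mul_lt_top ENNReal.ofReal_lt_top (by simp [Measure.dirac_apply_of_mem])

lemma posM_apply (Z : Finset α) (w : α → ℝ) {A : Set α} (hA : MeasurableSet A) :
    posM Z w A = ∑ z ∈ Z, ENNReal.ofReal (w z) * A.indicator 1 z := by
  simp only [posM, Measure.finset_sum_apply, Measure.smul_apply, smul_eq_mul,
    Measure.dirac_apply' _ hA]

lemma integral_posM (Z : Finset α) (w : α → ℝ) (f : α → ℝ) :
    ∫ x, f x ∂(posM Z w) = ∑ z ∈ Z, (max (w z) 0) * f z := by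
  rw [posM, integral_finset_sum_measure]
  · refine Finset.sum_congr rfl fun z _ => ?_
    rw [integral_smul_measure, integral_dirac, ENNReal.toReal_ofReal', smul_eq_mul]
  · exact fun z _ => (integrable_dirac'' f z).smul_measure (by simp)

lemma sum_sm_apply (Z : Finset α) (v : α → SignedMeasure α) (A : Set α) :
    (∑ z ∈ Z, v z) A = ∑ z ∈ Z, v z A := by
  have := map_sum ((VectorMeasure.coeFnAddMonoidHom (SignedMeasure α) (Set α) ℝ)) v Z
  calc (∑ z ∈ Z, v z) A = VectorMeasure.coeFnAddMonoidHom (SignedMeasure α) (Set α) ℝ (∑ z ∈ Z, v z) A := rfl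
    _ = ∑ z ∈ Z, v z A := by rw [this, Finset.sum_apply]; rfl

/-- Jordan decomposition of a discrete signed measure. -/
noncomputable def jdM (Z : Finset α) (w : α → ℝ) : JordanDecomposition α where
  posPart := posM Z w
  negPart := posM Z (-w)
  mutuallySingular := by
    refine ⟨(↑(Z.filter fun z => 0 < w z))ᶜ, (Z.filter fun z => 0 < w z).measurableSet.compl, ?_, ?_⟩
    · rw [posM_apply _ _ (Z.filter fun z => 0 < w z).measurableSet.compl]
      refine Finset.sum_eq_zero fun z hz => ?_
      by_cases hw : 0 < w z
      · have : z ∉ ((↑(Z.filter fun z => 0 < w z) : Set α)ᶜ) := by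
          simp [Finset.mem_filter, hz, hw]
        simp only [Set.indicator_of_notMem this, mul_zero]
      · simp [ENNReal.ofReal_eq_zero.2 (le_of_not_gt hw)]
    · rw [compl_compl, posM_apply _ _ (Z.filter fun z => 0 < w z).measurableSet]
      refine Finset.sum_eq_zero fun z hz => ?_
      by_cases hm : z ∈ (↑(Z.filter fun z => 0 < w z) : Set α)
      · have : 0 < w z := (Finset.mem_filter.1 (Finset.mem_coe.1 hm)).2
        have h2 : ENNReal.ofReal (-w z) = 0 := ENNReal.ofReal_eq_zero.2 (by linarith)
        simp [h2]
      · simp only [Set.indicator_of_notMem hm, mul_zero]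

lemma jd_discSM' (Z : Finset α) (w : α → ℝ) :
    (∑ z ∈ Z, w z • (Measure.dirac z).toSignedMeasure).toJordanDecomposition = jdM Z w := by
  apply MeasureTheory.SignedMeasure.toJordanDecomposition_eq
  ext A hA
  rw [JordanDecomposition.toSignedMeasure, VectorMeasure.sub_apply,
    Measure.toSignedMeasure_apply_measurable hA, Measure.toSignedMeasure_apply_measurable hA,
    sum_sm_apply]
  show ∑ z ∈ Z, (w z • (Measure.dirac z).toSignedMeasure) A = _
  show _ = (posM Z w).real A - (posM Z (-w)).real A
  rw [Measure.real, Measure.real, posM_apply _ _ hA, posM_apply _ _ hA,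
    ENNReal.toReal_sum (fun z _ => (ENNReal.mul_lt_top ENNReal.ofReal_lt_top
      (by by_cases h : z ∈ A <;> simp [h])).ne),
    ENNReal.toReal_sum (fun z _ => (ENNReal.mul_lt_top ENNReal.ofReal_lt_top
      (by by_cases h : z ∈ A <;> simp [h])).ne), ← Finset.sum_sub_distrib]
  refine Finset.sum_congr rfl fun z hz => ?_
  rw [VectorMeasure.smul_apply, Measure.toSignedMeasure_apply_measurable hA,
    Measure.real, Measure.dirac_apply' _ hA]
  by_cases h : z ∈ A
  · simp only [Set.indicator_of_mem h, Pi.one_apply, mul_one, ENNReal.toReal_mul,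
      ENNReal.toReal_ofReal', ENNReal.toReal_one, smul_eq_mul, Pi.neg_apply]
    rcases le_total 0 (w z) with h' | h'
    · rw [max_eq_left h', max_eq_right (by linarith)]; ring
    · rw [max_eq_right h', max_eq_left (by linarith)]; ring
  · simp [Set.indicator_of_notMem h]

lemma sint_sum_dirac (Z : Finset α) (w : α → ℝ) (f : α → ℝ) :
    sint (∑ z ∈ Z, w z • (Measure.dirac z).toSignedMeasure) f = ∑ z ∈ Z, w z * f z := by
  rw [sint, jd_discSM']
  show (∫ x, f x ∂(posM Z w)) - (∫ x, f x ∂(posM Z (-w))) = _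
  rw [integral_posM, integral_posM, ← Finset.sum_sub_distrib]
  refine Finset.sum_congr rfl fun z hz => ?_
  rw [Pi.neg_apply]
  rcases le_total 0 (w z) with h' | h'
  · rw [max_eq_left h', max_eq_right (by linarith)]; ring
  · rw [max_eq_right h', max_eq_left (by linarith)]; ring

lemma tv_sum_dirac (Z : Finset α) (w : α → ℝ) {A : Set α} (hA : MeasurableSet A) :
    (∑ z ∈ Z, w z • (Measure.dirac z).toSignedMeasure).totalVariation A
      = ∑ z ∈ Z, ENNReal.ofReal |w z| * A.indicator 1 z := by
  rw [MeasureTheory.SignedMeasure.totalVariation, jd_discSM']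
  show posM Z w A + posM Z (-w) A = _
  rw [posM_apply _ _ hA, posM_apply _ _ hA, ← Finset.sum_add_distrib]
  refine Finset.sum_congr rfl fun z hz => ?_
  rw [Pi.neg_apply, ← add_mul]
  congr 1
  rcases le_total 0 (w z) with h' | h'
  · rw [ENNReal.ofReal_eq_zero.2 (by linarith : -w z ≤ 0), abs_of_nonneg h', add_zero]
  · rw [ENNReal.ofReal_eq_zero.2 h', abs_of_nonpos h', zero_add]

lemma tvnorm_sum_dirac (Z : Finset α) (w : α → ℝ) :
    tvNorm (∑ z ∈ Z, w z • (Measure.dirac z).toSignedMeasure) = ∑ z ∈ Z, |w z| := by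
  rw [tvNorm, tv_sum_dirac _ _ MeasurableSet.univ,
    ENNReal.toReal_sum (fun z _ => (ENNReal.mul_lt_top ENNReal.ofReal_lt_top (by simp)).ne)]
  refine Finset.sum_congr rfl fun z hz => ?_
  simp [ENNReal.toReal_ofReal (abs_nonneg (w z))]

lemma tv_sum_dirac_compl (Z : Finset α) (w : α → ℝ) {K : Set α} (hK : MeasurableSet K)
    (hZK : ↑Z ⊆ K) :
    (∑ z ∈ Z, w z • (Measure.dirac z).toSignedMeasure).totalVariation Kᶜ = 0 := by
  rw [tv_sum_dirac _ _ hK.compl]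
  refine Finset.sum_eq_zero fun z hz => ?_
  have : z ∉ Kᶜ := fun h => h (hZK hz)
  simp [Set.indicator_of_notMem this]

-- === M2 ===


variable {n : ℕ}

lemma peval_continuous (f : MvPolynomial (Fin n) ℝ) : Continuous (peval f) := by
  have h1 : Continuous fun (z : EuclideanSpace ℝ (Fin n)) => (fun j => z j) :=
    continuous_pi fun j => by
      exact (EuclideanSpace.proj j).continuous
  exact (MvPolynomial.continuous_eval (p := f)).comp h1

/-- affine polynomial equal to `1` at `a` and `0` at `b` (when `a ≠ b`) -/
noncomputable def lsep (a b : EuclideanSpace ℝ (Fin n)) : MvPolynomial (Fin n) ℝ :=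
  MvPolynomial.C (∑ j, (a j - b j) ^ 2)⁻¹ *
    ∑ j, MvPolynomial.C (a j - b j) * (MvPolynomial.X j - MvPolynomial.C (b j))

lemma peval_lsep (a b z : EuclideanSpace ℝ (Fin n)) :
    peval (lsep a b) z = (∑ j, (a j - b j) ^ 2)⁻¹ * ∑ j, (a j - b j) * (z j - b j) := by
  simp [lsep, peval]

lemma peval_lsep_base (a b : EuclideanSpace ℝ (Fin n)) : peval (lsep a b) b = 0 := by
  simp [peval_lsep]

lemma peval_lsep_self {a b : EuclideanSpace ℝ (Fin n)} (h : a ≠ b) : peval (lsep a b) a = 1 := by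
  rw [peval_lsep]
  have h2 : ∀ j, (a j - b j) * (a j - b j) = (a j - b j) ^ 2 := fun j => (sq _).symm
  simp_rw [h2]
  refine inv_mul_cancel₀ ?_
  intro h0
  apply h
  have hz : ∀ j ∈ Finset.univ, (a j - b j) ^ 2 = 0 := by
    intro j _
    exact (Finset.sum_eq_zero_iff_of_nonneg (fun j _ => sq_nonneg _)).1 h0 j (Finset.mem_univ j)
  ext j
  have := hz j (Finset.mem_univ j)
  have : a j - b j = 0 := by
    have := sq_eq_zero_iff.1 this
    exact this
  linarith

/-- product of separators: `1` at `x` (if `x ∉ S`), `0` on `S`. -/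
noncomputable def vanishP (x : EuclideanSpace ℝ (Fin n)) (S : Finset (EuclideanSpace ℝ (Fin n))) :
    MvPolynomial (Fin n) ℝ := ∏ b ∈ S, lsep x b

lemma peval_vanishP (x : EuclideanSpace ℝ (Fin n)) (S : Finset _) (z : EuclideanSpace ℝ (Fin n)) :
    peval (vanishP x S) z = ∏ b ∈ S, peval (lsep x b) z := by
  simp [vanishP, peval]

lemma peval_vanishP_self {x : EuclideanSpace ℝ (Fin n)} {S : Finset _} (h : x ∉ S) :
    peval (vanishP x S) x = 1 := by
  rw [peval_vanishP]
  refine Finset.prod_eq_one fun b hb => peval_lsep_self fun hxb => h (hxb ▸ hb)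

lemma peval_vanishP_zero {x : EuclideanSpace ℝ (Fin n)} {S : Finset _} {b : EuclideanSpace ℝ (Fin n)}
    (hb : b ∈ S) : peval (vanishP x S) b = 0 := by
  rw [peval_vanishP]
  exact Finset.prod_eq_zero hb (peval_lsep_base x b)

/-- The sum-of-squares polynomial associated to the generators. -/
noncomputable def sos {s : ℕ} (f : Fin s → MvPolynomial (Fin n) ℝ) : MvPolynomial (Fin n) ℝ :=
  ∑ i, f i ^ 2

lemma peval_sos {s : ℕ} (f : Fin s → MvPolynomial (Fin n) ℝ) (z : EuclideanSpace ℝ (Fin n)) :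
    peval (sos f) z = ∑ i, peval (f i) z ^ 2 := by simp [sos, peval]

lemma sos_nonneg {s : ℕ} (f : Fin s → MvPolynomial (Fin n) ℝ) (z : EuclideanSpace ℝ (Fin n)) :
    0 ≤ peval (sos f) z := by
  rw [peval_sos]; exact Finset.sum_nonneg fun i _ => sq_nonneg _

/-- pointwise Cauchy–Schwarz: any element of the ideal is controlled by `sos f`. -/
lemma sq_peval_le_of_mem {s : ℕ} {f : Fin s → MvPolynomial (Fin n) ℝ}
    {h : MvPolynomial (Fin n) ℝ} (hmem : h ∈ Ideal.span (Set.range f))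
    : ∃ G : EuclideanSpace ℝ (Fin n) → ℝ, Continuous G ∧ (∀ z, 0 ≤ G z) ∧
      ∀ z, peval h z ^ 2 ≤ G z * peval (sos f) z := by
  obtain ⟨g, hg⟩ := Ideal.mem_span_range_iff_exists_fun.1 hmem
  refine ⟨fun z => ∑ i, peval (g i) z ^ 2, ?_, fun z => Finset.sum_nonneg fun i _ => sq_nonneg _,
    fun z => ?_⟩
  · exact continuous_finset_sum _ fun i _ => (peval_continuous (g i)).pow 2
  · have : peval h z = ∑ i, peval (g i) z * peval (f i) z := by
      rw [← hg]; simp [peval]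
    rw [this, peval_sos]
    exact Finset.sum_mul_sq_le_sq_mul_sq Finset.univ _ _

lemma sos_pos_of_notmem {s : ℕ} {f : Fin s → MvPolynomial (Fin n) ℝ}
    {X : Finset (EuclideanSpace ℝ (Fin n))}
    (hfgen : ∀ q : MvPolynomial (Fin n) ℝ, (∀ x ∈ X, peval q x = 0) →
      q ∈ Ideal.span (Set.range f))
    {z : EuclideanSpace ℝ (Fin n)} (hz : z ∉ X) : 0 < peval (sos f) z := by
  rcases lt_or_eq_of_le (sos_nonneg f z) with h | h
  · exact h
  exfalso
  have hf0 : ∀ i, peval (f i) z = 0 := by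
    intro i
    have := (Finset.sum_eq_zero_iff_of_nonneg (fun i (_ : i ∈ Finset.univ) => sq_nonneg
      (peval (f i) z))).1 (by rw [← peval_sos, ← h]) i (Finset.mem_univ i)
    exact pow_eq_zero_iff (n := 2) (by norm_num) |>.1 this
  have hQ : vanishP z X ∈ Ideal.span (Set.range f) :=
    hfgen _ fun x hx => peval_vanishP_zero hx
  obtain ⟨g, hg⟩ := Ideal.mem_span_range_iff_exists_fun.1 hQ
  have h1 : peval (vanishP z X) z = 1 := peval_vanishP_self (fun h => hz h)
  have h0 : peval (vanishP z X) z = 0 := by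
    rw [← hg]
    have : peval (∑ i, g i * f i) z = ∑ i, peval (g i) z * peval (f i) z := by simp [peval]
    rw [this]
    exact Finset.sum_eq_zero fun i _ => by rw [hf0 i, mul_zero]
  rw [h1] at h0; exact one_ne_zero h0

lemma local_estimate {s : ℕ} {f : Fin s → MvPolynomial (Fin n) ℝ}
    {X : Finset (EuclideanSpace ℝ (Fin n))} {K : Set (EuclideanSpace ℝ (Fin n))}
    (hK : IsCompact K)
    (hfgen : ∀ q : MvPolynomial (Fin n) ℝ, (∀ x ∈ X, peval q x = 0) →
      q ∈ Ideal.span (Set.range f))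
    {x : EuclideanSpace ℝ (Fin n)} (hx : x ∈ X) :
    ∃ r C : ℝ, 0 < r ∧ 0 ≤ C ∧
      ∀ z ∈ K, dist z x ≤ r → dist z x ^ 2 ≤ C * peval (sos f) z := by
  set L := vanishP x (X.erase x) with hLdef
  have hL1 : peval L x = 1 := peval_vanishP_self (fun h => (Finset.mem_erase.1 h).1 rfl)
  -- radius where L ≥ 1/2
  obtain ⟨r0, hr0, hball⟩ := Metric.continuousAt_iff.1 (peval_continuous L).continuousAt
    (1/2) (by norm_num)
  -- per-coordinate ideal elements
  have hHj : ∀ j : Fin n, ∃ C : ℝ, 0 ≤ C ∧ ∀ z ∈ K,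
      (z j - x j) ^ 2 * peval L z ^ 2 ≤ C * peval (sos f) z := by
    intro j
    set H := (MvPolynomial.X j - MvPolynomial.C (x j)) * L with hHdef
    have hHvan : ∀ x' ∈ X, peval H x' = 0 := by
      intro x' hx'
      have hsplit : peval H x' = (x' j - x j) * peval L x' := by simp [hHdef, peval]
      by_cases hxx : x' = x
      · rw [hsplit, hxx]; simp
      · rw [hsplit, hLdef, peval_vanishP_zero (Finset.mem_erase.2 ⟨hxx, hx'⟩), mul_zero]
    obtain ⟨G, hGc, hGnn, hGb⟩ := sq_peval_le_of_mem (hfgen H hHvan)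
    obtain ⟨C, hC⟩ := hK.exists_bound_of_continuousOn hGc.continuousOn
    refine ⟨max C 0, le_max_right _ _, fun z hz => ?_⟩
    have h1 : peval H z = (z j - x j) * peval L z := by simp [hHdef, peval]
    have h2 := hGb z
    rw [h1, mul_pow] at h2
    refine h2.trans (mul_le_mul_of_nonneg_right ?_ (sos_nonneg f z))
    exact le_trans (le_abs_self _) (le_trans (hC z hz) (le_max_left _ _))
  choose Cj hCjnn hCjb using hHj
  refine ⟨r0 / 2, 4 * ∑ j, Cj j, by linarith, by have := Finset.sum_nonneg (fun j (_ : j ∈ Finset.univ) => hCjnn j); linarith, fun z hz hdist => ?_⟩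
  have hLhalf : (1/2 : ℝ) ≤ peval L z := by
    have := hball (show dist z x < r0 by linarith)
    rw [hL1, Real.dist_eq] at this
    have := abs_lt.1 this
    linarith [this.1]
  have hdsq : dist z x ^ 2 = ∑ j, (z j - x j) ^ 2 := by
    rw [EuclideanSpace.dist_eq]
    rw [Real.sq_sqrt (Finset.sum_nonneg fun j _ => sq_nonneg _)]
    exact Finset.sum_congr rfl fun j _ => by rw [Real.dist_eq, sq_abs]
  rw [hdsq, Finset.mul_sum, Finset.sum_mul]
  refine Finset.sum_le_sum fun j _ => ?_
  have h1 : (z j - x j) ^ 2 * peval L z ^ 2 ≤ Cj j * peval (sos f) z := hCjb j z hz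
  have h2 : (1/4 : ℝ) ≤ peval L z ^ 2 := by nlinarith
  nlinarith [sq_nonneg (z j - x j), sos_nonneg f z, hCjnn j]

lemma qic_bound {s : ℕ} {f : Fin s → MvPolynomial (Fin n) ℝ}
    {X : Finset (EuclideanSpace ℝ (Fin n))} {K : Set (EuclideanSpace ℝ (Fin n))}
    (hK : IsCompact K) (hXne : X.Nonempty) (hXK : ↑X ⊆ K)
    (hfgen : ∀ q : MvPolynomial (Fin n) ℝ, (∀ x ∈ X, peval q x = 0) →
      q ∈ Ideal.span (Set.range f)) :
    ∃ α m : ℝ, 0 < α ∧ 0 < m ∧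
      ∀ z ∈ K, min (α * Metric.infDist z ↑X ^ 2) m ≤ peval (sos f) z := by
  have hloc := fun (x : EuclideanSpace ℝ (Fin n)) (hx : x ∈ X) => local_estimate hK hfgen hx
  choose! r C hr hC hb using hloc
  set r0 := X.inf' hXne r with hr0def
  have hr0pos : 0 < r0 := by
    rw [hr0def, Finset.lt_inf'_iff]
    exact fun x hx => hr x hx
  set C0 := X.sup' hXne C + 1 with hC0def
  have hC0pos : 0 < C0 := by
    have hXne' := hXne
    obtain ⟨x0, hx0⟩ := hXne'
    have h1 : C x0 ≤ X.sup' hXne C := Finset.le_sup' C hx0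
    have := hC x0 hx0
    rw [hC0def]; linarith
  -- uniform positive lower bound away from X
  obtain ⟨m, hmpos, hm⟩ : ∃ m : ℝ, 0 < m ∧
      ∀ z ∈ K, r0 ≤ Metric.infDist z ↑X → m ≤ peval (sos f) z := by
    set S := K ∩ {z | r0 ≤ Metric.infDist z ↑X} with hSdef
    have hScpt : IsCompact S :=
      hK.inter_right (isClosed_le continuous_const (Metric.continuous_infDist_pt _))
    rcases Set.eq_empty_or_nonempty S with hS | hS
    · exact ⟨1, one_pos, fun z hz hd =>
        absurd (show z ∈ (∅ : Set _) by rw [← hS]; exact ⟨hz, hd⟩) (Set.notMem_empty z)⟩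
    · obtain ⟨z0, hz0S, hmin⟩ := hScpt.exists_isMinOn hS (peval_continuous (sos f)).continuousOn
      have hz0X : z0 ∉ X := by
        intro hmem
        have : Metric.infDist z0 ↑X = 0 := Metric.infDist_zero_of_mem (by exact_mod_cast hmem)
        have := hz0S.2
        rw [Set.mem_setOf_eq] at this
        linarith
      exact ⟨peval (sos f) z0, sos_pos_of_notmem hfgen hz0X,
        fun z hz hd => hmin ⟨hz, hd⟩⟩
  refine ⟨C0⁻¹, m, inv_pos.2 hC0pos, hmpos, fun z hz => ?_⟩
  by_cases h : Metric.infDist z ↑X < r0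
  · obtain ⟨x, hxX, hdx⟩ := X.finite_toSet.isCompact.exists_infDist_eq_dist
      (by exact_mod_cast hXne) z
    have hxX' : x ∈ X := by exact_mod_cast hxX
    refine le_trans (min_le_left _ _) ?_
    rw [hdx]
    have hdr : dist z x ≤ r x := by
      have : r0 ≤ r x := Finset.inf'_le r hxX'
      linarith [hdx ▸ h]
    have hbound := hb x hxX' z hz hdr
    have hCle : C x ≤ C0 := by
      have : C x ≤ X.sup' hXne C := Finset.le_sup' C hxX'
      rw [hC0def]; linarith
    have hsos := sos_nonneg f z
    have h1 : C0⁻¹ * dist z x ^ 2 ≤ C0⁻¹ * (C x * peval (sos f) z) :=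
      mul_le_mul_of_nonneg_left hbound (inv_nonneg.2 hC0pos.le)
    have h2 : C0⁻¹ * (C x * peval (sos f) z) ≤ C0⁻¹ * (C0 * peval (sos f) z) :=
      mul_le_mul_of_nonneg_left (mul_le_mul_of_nonneg_right hCle hsos) (inv_nonneg.2 hC0pos.le)
    have h3 : C0⁻¹ * (C0 * peval (sos f) z) = peval (sos f) z := by
      field_simp
    linarith
  · exact le_trans (min_le_right _ _) (hm z hz (not_lt.1 h))

-- === M3 ===

end AuxLemmas

set_option maxHeartbeats 1000000 in
/-- **Quantitative localization from a quadratic isolation condition**: let `K ⊆ ℝⁿ`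
be compact and `X ⊆ K` finite nonempty with vanishing ideal generated in degree `≤ g`.
There are constants `C_a > 0`, `0 < C_b < 1` depending only on `X` (and `K` and the
generators) such that, for every `d ≥ 2g`, every `L²(τ)`-orthonormal basis `φ` of the
polynomials of degree `≤ d`, every positive discrete measure `μ` supported on `X`,
every noise `ε` with `‖ε‖₂ ≤ δ`, and every discrete signed measure `Δ̂ = Σ_z Δ̂(z) δ_z`
minimizing the TV norm subject to `‖(∫ φᵢ dν − yᵢ)ᵢ‖₂ ≤ δ`, with `c₀ = √(C_b/C_a)`:
(1) every atom with `Δ̂(z) > 2δ/C_b` is within `c₀` of `X`; (2) the stated bounds on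
near spikes, far spikes, and negative spikes hold. -/
theorem blasso_localization_of_QIC {n : ℕ}
    (K : Set (EuclideanSpace ℝ (Fin n))) (hK : IsCompact K)
    (X : Finset (EuclideanSpace ℝ (Fin n))) (hXne : X.Nonempty) (hXK : ↑X ⊆ K)
    (g : ℕ) (s : ℕ) (f : Fin s → MvPolynomial (Fin n) ℝ)
    (hfdeg : ∀ i, (f i).totalDegree ≤ g)
    (hfvan : ∀ i, ∀ x ∈ X, peval (f i) x = 0)
    (hfgen : ∀ q : MvPolynomial (Fin n) ℝ, (∀ x ∈ X, peval q x = 0) →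
      q ∈ Ideal.span (Set.range f)) :
    ∃ Ca Cb : ℝ, 0 < Ca ∧ 0 < Cb ∧ Cb < 1 ∧
      ∀ (d : ℕ), 2 * g ≤ d →
      ∀ (τ : Measure (EuclideanSpace ℝ (Fin n))), IsProbabilityMeasure τ → τ Kᶜ = 0 →
      ∀ (T : ℕ) (φ : Fin T → MvPolynomial (Fin n) ℝ),
        (∀ i, (φ i).totalDegree ≤ d) →
        (∀ q : MvPolynomial (Fin n) ℝ, q.totalDegree ≤ d →
          q ∈ Submodule.span ℝ (Set.range φ)) →
        (∀ i j, ∫ z, peval (φ i) z * peval (φ j) z ∂τ = if i = j then (1 : ℝ) else 0) →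
      ∀ (c : EuclideanSpace ℝ (Fin n) → ℝ), (∀ x, 0 ≤ c x) →
      ∀ (δ : ℝ) (ε : Fin T → ℝ), Real.sqrt (∑ i, ε i ^ 2) ≤ δ →
      ∀ (y : Fin T → ℝ), (∀ i, y i = (∑ x ∈ X, c x * peval (φ i) x) + ε i) →
      ∀ (Z : Finset (EuclideanSpace ℝ (Fin n))) (w : EuclideanSpace ℝ (Fin n) → ℝ),
        ↑Z ⊆ K →
        BlassoFeasible K φ y δ (discSM Z w) →
        (∀ ν : SignedMeasure (EuclideanSpace ℝ (Fin n)), BlassoFeasible K φ y δ ν →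
          tvNorm (discSM Z w) ≤ tvNorm ν) →
        ((∀ z ∈ Z, 2 * δ / Cb < w z → Metric.infDist z ↑X ≤ Real.sqrt (Cb / Ca)) ∧
         (∑ z ∈ Z, (if Metric.infDist z ↑X ≤ Real.sqrt (Cb / Ca) ∧ 0 < w z
            then w z * Metric.infDist z ↑X ^ 2 else 0)) ≤ 2 * δ / Ca ∧
         (∑ z ∈ Z, (if Real.sqrt (Cb / Ca) ≤ Metric.infDist z ↑X ∧ 0 < w z
            then w z else 0)) ≤ 2 * δ / Cb ∧
         (∑ z ∈ Z, (if w z < 0 then |w z| else 0)) ≤ 2 * δ) := by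
  classical
  obtain ⟨α, m, hα, hm, hqic⟩ := qic_bound hK hXne hXK hfgen
  obtain ⟨M, hM⟩ := hK.exists_bound_of_continuousOn (peval_continuous (sos f)).continuousOn
  have hM0 : 0 ≤ M := by
    obtain ⟨x0, hx0⟩ := hXne
    exact le_trans (norm_nonneg _) (hM x0 (hXK hx0))
  set B : ℝ := M + m + 1 with hBdef
  have hB0 : 0 < B := by linarith
  have hBs : ∀ z ∈ K, peval (sos f) z ≤ B := fun z hz =>
    le_trans (le_trans (le_abs_self _) (hM z hz)) (by linarith)
  have hmB : m < 2 * B := by linarith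
  set t : ℝ := (2 * B)⁻¹ with htdef
  have ht : 0 < t := inv_pos.2 (by linarith)
  refine ⟨t * α, t * m, mul_pos ht hα, mul_pos ht hm, ?_, ?_⟩
  · rw [htdef, inv_mul_lt_iff₀ (by linarith : (0:ℝ) < 2 * B)]
    linarith
  intro d hd τ hτprob hτK T φ hφdeg hφspan hφortho c hc δ ε hε y hy Z w hZK hfeas hmin
  set Ca := t * α with hCadef
  set Cb := t * m with hCbdef
  have hCa : 0 < Ca := mul_pos ht hα
  have hCb : 0 < Cb := mul_pos ht hm
  have hδ0 : 0 ≤ δ := le_trans (Real.sqrt_nonneg _) hε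
  set c₀ : ℝ := Real.sqrt (Cb / Ca) with hc₀def
  have hc₀sq : c₀ ^ 2 = Cb / Ca := Real.sq_sqrt (le_of_lt (div_pos hCb hCa))
  have hc₀0 : 0 ≤ c₀ := hc₀def ▸ Real.sqrt_nonneg _
  -- the dual certificate polynomial
  set q : MvPolynomial (Fin n) ℝ := 1 - MvPolynomial.C t * sos f with hqdef
  have hqeval : ∀ z, peval q z = 1 - t * peval (sos f) z := by
    intro z; simp [hqdef, peval, sos]
  have hqdeg : q.totalDegree ≤ d := by
    have hsosdeg : (sos f).totalDegree ≤ 2 * g := by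
      refine le_trans (MvPolynomial.totalDegree_finset_sum _ _) (Finset.sup_le fun i _ => ?_)
      refine le_trans (MvPolynomial.totalDegree_pow _ _) ?_
      have := hfdeg i
      omega
    have hq' : q = 1 + MvPolynomial.C (-t) * sos f := by rw [hqdef, map_neg, neg_mul, ← sub_eq_add_neg]
    rw [hq']
    refine le_trans (MvPolynomial.totalDegree_add _ _) (max_le (by simp) ?_)
    refine le_trans (MvPolynomial.totalDegree_mul _ _) ?_
    rw [MvPolynomial.totalDegree_C]
    omega
  obtain ⟨a, ha⟩ := (Submodule.mem_span_range_iff_exists_fun ℝ).1 (hφspan q hqdeg)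
  have hq_rep : ∀ z, peval q z = ∑ i, a i * peval (φ i) z := by
    intro z
    rw [← ha]
    simp [peval]
  have hq01 : ∀ z ∈ K, 0 ≤ peval q z ∧ peval q z ≤ 1 := by
    intro z hz
    rw [hqeval]
    constructor
    · have h1 : t * peval (sos f) z ≤ t * B := mul_le_mul_of_nonneg_left (hBs z hz) ht.le
      have h2 : t * B = 1/2 := by rw [htdef]; field_simp
      have h3 : t * peval (sos f) z ≤ 1/2 := h2 ▸ h1
      linarith
    · nlinarith [sos_nonneg f z]
  have hqX1 : ∀ x ∈ X, peval q x = 1 := by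
    intro x hx
    rw [hqeval, peval_sos]
    have : ∀ i ∈ Finset.univ, peval (f i) x ^ 2 = 0 := fun i _ => by rw [hfvan i x hx]; ring
    rw [Finset.sum_congr rfl this]
    simp
  have hgap : ∀ z ∈ K, min (Ca * Metric.infDist z ↑X ^ 2) Cb ≤ 1 - peval q z := by
    intro z hz
    have hsub : 1 - peval q z = t * peval (sos f) z := by rw [hqeval]; ring
    rw [hsub]
    have h0 := hqic z hz
    have h1 : t * min (α * Metric.infDist z ↑X ^ 2) m ≤ t * peval (sos f) z :=
      mul_le_mul_of_nonneg_left h0 ht.le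
    rcases min_cases (α * Metric.infDist z ↑X ^ 2) m with ⟨he, hle⟩ | ⟨he, hle⟩
    · rw [he] at h1
      refine le_trans (min_le_left _ _) ?_
      calc Ca * Metric.infDist z ↑X ^ 2 = t * (α * Metric.infDist z ↑X ^ 2) := by
            rw [hCadef]; ring
        _ ≤ t * peval (sos f) z := h1
    · rw [he] at h1
      refine le_trans (min_le_right _ _) ?_
      calc Cb = t * m := hCbdef
        _ ≤ t * peval (sos f) z := h1
  -- coefficient norm bound
  have hint2 : ∀ i, Integrable (fun z => peval (φ i) z * peval (φ i) z) τ := by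
    intro i
    by_contra hni
    have h0 := integral_undef hni
    have h1 := hφortho i i
    rw [if_pos rfl] at h1
    rw [h0] at h1
    exact one_ne_zero h1.symm
  have hintij : ∀ i j, Integrable (fun z => peval (φ i) z * peval (φ j) z) τ := by
    intro i j
    refine Integrable.mono ((hint2 i).add (hint2 j))
      (((peval_continuous (φ i)).mul (peval_continuous (φ j))).aestronglyMeasurable)
      (Filter.Eventually.of_forall fun z => ?_)
    simp only [Pi.add_apply]
    rw [Real.norm_eq_abs, Real.norm_eq_abs, abs_mul]
    have h1 : |peval (φ i) z * peval (φ i) z + peval (φ j) z * peval (φ j) z|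
        = peval (φ i) z * peval (φ i) z + peval (φ j) z * peval (φ j) z := by
      refine abs_of_nonneg ?_
      nlinarith [mul_self_nonneg (peval (φ i) z), mul_self_nonneg (peval (φ j) z)]
    rw [h1]
    nlinarith [sq_nonneg (|peval (φ i) z| - |peval (φ j) z|), abs_nonneg (peval (φ i) z),
      abs_nonneg (peval (φ j) z), sq_abs (peval (φ i) z), sq_abs (peval (φ j) z),
      abs_mul_abs_self (peval (φ i) z), abs_mul_abs_self (peval (φ j) z)]
  have hqfun : (fun z => peval q z ^ 2)
      = fun z => ∑ i, ∑ j, (a i * a j) * (peval (φ i) z * peval (φ j) z) := by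
    funext z
    rw [hq_rep z, sq, Finset.sum_mul_sum]
    exact Finset.sum_congr rfl fun i _ => Finset.sum_congr rfl fun j _ => by ring
  have hq2int : Integrable (fun z => peval q z ^ 2) τ := by
    rw [hqfun]
    exact integrable_finset_sum _ fun i _ =>
      integrable_finset_sum _ fun j _ => (hintij i j).const_mul _
  have hq2val : ∫ z, peval q z ^ 2 ∂τ = ∑ i, a i ^ 2 := by
    rw [hqfun]
    rw [integral_finset_sum _ (fun i _ =>
      integrable_finset_sum _ fun j _ => (hintij i j).const_mul _)]
    have : ∀ i ∈ Finset.univ, (∫ z, ∑ j, (a i * a j) * (peval (φ i) z * peval (φ j) z) ∂τ)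
        = a i ^ 2 := by
      intro i _
      rw [integral_finset_sum _ (fun j _ => (hintij i j).const_mul _)]
      have : ∀ j ∈ Finset.univ, (∫ z, (a i * a j) * (peval (φ i) z * peval (φ j) z) ∂τ)
          = (a i * a j) * if i = j then (1:ℝ) else 0 := by
        intro j _
        rw [MeasureTheory.integral_const_mul, hφortho i j]
      rw [Finset.sum_congr rfl this]
      simp [mul_ite, sq]
    rw [Finset.sum_congr rfl this]
  have hKae : ∀ᵐ z ∂τ, z ∈ K := by
    rw [ae_iff]
    have : {z | ¬ z ∈ K} = Kᶜ := rfl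
    rw [this, hτK]
  have hnorm_a : ∑ i, a i ^ 2 ≤ 1 := by
    rw [← hq2val]
    have hmono : ∫ z, peval q z ^ 2 ∂τ ≤ ∫ _, (1:ℝ) ∂τ := by
      refine integral_mono_ae hq2int (integrable_const 1) ?_
      filter_upwards [hKae] with z hz
      obtain ⟨h0, h1⟩ := hq01 z hz
      nlinarith
    have : ∫ _, (1:ℝ) ∂τ = 1 := by simp
    linarith
  -- integral formulas
  set SZ : Fin T → ℝ := fun i => ∑ z ∈ Z, w z * peval (φ i) z with hSZdef
  set SX : Fin T → ℝ := fun i => ∑ x ∈ X, c x * peval (φ i) x with hSXdef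
  have hSZ : ∀ i, sint (discSM Z w) (peval (φ i)) = SZ i := fun i => sint_sum_dirac Z w _
  -- μ is feasible
  have hfeasμ : BlassoFeasible K φ y δ (discSM X c) := by
    constructor
    · exact tv_sum_dirac_compl X c hK.isClosed.measurableSet hXK
    · have hrw : ∀ i, sint (discSM X c) (peval (φ i)) = SX i := fun i => sint_sum_dirac X c _
      have : ∀ i ∈ Finset.univ, (sint (discSM X c) (peval (φ i)) - y i) ^ 2 = ε i ^ 2 := by
        intro i _
        rw [hrw i, hy i, hSXdef]
        ring
      rw [Finset.sum_congr rfl this]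
      exact hε
  -- main inequality
  have hmain : ∑ z ∈ Z, (|w z| - w z * peval q z) ≤ 2 * δ := by
    have htvZ : tvNorm (discSM Z w) = ∑ z ∈ Z, |w z| := tvnorm_sum_dirac Z w
    have htvX : tvNorm (discSM X c) = ∑ x ∈ X, c x := by
      have h := tvnorm_sum_dirac X c
      rw [show tvNorm (discSM X c) = tvNorm (∑ x ∈ X, c x • (Measure.dirac x).toSignedMeasure)
        from rfl, h]
      exact Finset.sum_congr rfl fun x _ => abs_of_nonneg (hc x)
    have h1 : ∑ z ∈ Z, |w z| ≤ ∑ x ∈ X, c x := by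
      rw [← htvZ, ← htvX]; exact hmin _ hfeasμ
    have h2 : ∑ x ∈ X, c x = ∑ i, a i * SX i := by
      calc ∑ x ∈ X, c x = ∑ x ∈ X, c x * peval q x :=
            Finset.sum_congr rfl fun x hx => by rw [hqX1 x hx, mul_one]
        _ = ∑ x ∈ X, ∑ i, c x * (a i * peval (φ i) x) := by
            refine Finset.sum_congr rfl fun x hx => ?_
            rw [hq_rep x, Finset.mul_sum]
        _ = ∑ i, ∑ x ∈ X, c x * (a i * peval (φ i) x) := Finset.sum_comm
        _ = ∑ i, a i * SX i := by
            refine Finset.sum_congr rfl fun i _ => ?_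
            rw [hSXdef, Finset.mul_sum]
            exact Finset.sum_congr rfl fun x _ => by ring
    have h3 : ∑ z ∈ Z, w z * peval q z = ∑ i, a i * SZ i := by
      calc ∑ z ∈ Z, w z * peval q z = ∑ z ∈ Z, ∑ i, w z * (a i * peval (φ i) z) := by
            refine Finset.sum_congr rfl fun z hz => ?_
            rw [hq_rep z, Finset.mul_sum]
        _ = ∑ i, ∑ z ∈ Z, w z * (a i * peval (φ i) z) := Finset.sum_comm
        _ = ∑ i, a i * SZ i := by
            refine Finset.sum_congr rfl fun i _ => ?_
            rw [hSZdef, Finset.mul_sum]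
            exact Finset.sum_congr rfl fun z _ => by ring
    -- Cauchy-Schwarz and triangle inequality
    set u : EuclideanSpace ℝ (Fin T) := WithLp.toLp 2 (fun i => SZ i - y i) with hudef
    set v : EuclideanSpace ℝ (Fin T) := WithLp.toLp 2 (fun i => ε i) with hvdef
    have hnormu : ‖u‖ = Real.sqrt (∑ i, (SZ i - y i) ^ 2) := by
      rw [EuclideanSpace.norm_eq]
      congr 1
      exact Finset.sum_congr rfl fun i _ => by rw [Real.norm_eq_abs, sq_abs]
    have hnormv : ‖v‖ = Real.sqrt (∑ i, ε i ^ 2) := by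
      rw [EuclideanSpace.norm_eq]
      congr 1
      exact Finset.sum_congr rfl fun i _ => by rw [Real.norm_eq_abs, sq_abs]
    have hu : ‖u‖ ≤ δ := by
      rw [hnormu]
      have := hfeas.2
      have hrw : ∀ i ∈ Finset.univ, (sint (discSM Z w) (peval (φ i)) - y i) ^ 2
          = (SZ i - y i) ^ 2 := fun i _ => by rw [hSZ i]
      rwa [Finset.sum_congr rfl hrw] at this
    have hv : ‖v‖ ≤ δ := by rw [hnormv]; exact hε
    have huv : Real.sqrt (∑ i, (SX i - SZ i) ^ 2) ≤ 2 * δ := by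
      have heq : ∀ i ∈ Finset.univ, (SX i - SZ i) ^ 2 = ((u + v) i) ^ 2 := by
        intro i _
        have : (u + v) i = u i + v i := rfl
        rw [this, hudef, hvdef]
        have h1 : SX i - SZ i = -((SZ i - y i) + ε i) := by rw [hy i]; rw [hSXdef]; ring
        rw [h1]
        ring_nf
      rw [Finset.sum_congr rfl heq]
      have : Real.sqrt (∑ i, ((u + v) i) ^ 2) = ‖u + v‖ := by
        rw [EuclideanSpace.norm_eq]
        congr 1
        exact Finset.sum_congr rfl fun i _ => by rw [Real.norm_eq_abs, sq_abs]
      rw [this]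
      calc ‖u + v‖ ≤ ‖u‖ + ‖v‖ := norm_add_le u v
        _ ≤ 2 * δ := by linarith
    have hCS : |∑ i, a i * (SX i - SZ i)| ≤ 2 * δ := by
      have h := Finset.sum_mul_sq_le_sq_mul_sq Finset.univ a (fun i => SX i - SZ i)
      have habs : |∑ i, a i * (SX i - SZ i)|
          = Real.sqrt ((∑ i, a i * (SX i - SZ i)) ^ 2) := (Real.sqrt_sq_eq_abs _).symm
      rw [habs]
      calc Real.sqrt ((∑ i, a i * (SX i - SZ i)) ^ 2)
          ≤ Real.sqrt ((∑ i, a i ^ 2) * ∑ i, (SX i - SZ i) ^ 2) := Real.sqrt_le_sqrt h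
        _ = Real.sqrt (∑ i, a i ^ 2) * Real.sqrt (∑ i, (SX i - SZ i) ^ 2) :=
            Real.sqrt_mul (Finset.sum_nonneg fun i _ => sq_nonneg _) _
        _ ≤ 1 * (2 * δ) := by
            refine mul_le_mul ?_ huv (Real.sqrt_nonneg _) one_pos.le
            rw [show (1:ℝ) = Real.sqrt 1 by rw [Real.sqrt_one]]
            exact Real.sqrt_le_sqrt hnorm_a
        _ = 2 * δ := one_mul _
    have hsplit : ∑ i, a i * SX i - ∑ i, a i * SZ i = ∑ i, a i * (SX i - SZ i) := by
      rw [← Finset.sum_sub_distrib]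
      exact Finset.sum_congr rfl fun i _ => by ring
    have h4 : ∑ i, a i * (SX i - SZ i) ≤ 2 * δ := le_trans (le_abs_self _) hCS
    rw [Finset.sum_sub_distrib]
    rw [h3]
    linarith
  -- per-atom lower bounds
  have hterm0 : ∀ z ∈ Z, 0 ≤ |w z| - w z * peval q z := by
    intro z hz
    obtain ⟨h0, h1⟩ := hq01 z (hZK hz)
    rcases le_or_gt 0 (w z) with hw | hw
    · nlinarith [abs_of_nonneg hw]
    · nlinarith [abs_of_neg hw]
  have htermpos : ∀ z ∈ Z, 0 ≤ w z →
      w z * min (Ca * Metric.infDist z ↑X ^ 2) Cb ≤ |w z| - w z * peval q z := by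
    intro z hz hw
    have hg := hgap z (hZK hz)
    rw [abs_of_nonneg hw]
    nlinarith
  constructor
  · -- claim (1)
    intro z0 hz0 hwz0
    by_contra hd0
    push_neg at hd0
    have hw0 : 0 < w z0 := lt_of_le_of_lt (div_nonneg (by linarith) hCb.le) hwz0
    have hminCb : min (Ca * Metric.infDist z0 ↑X ^ 2) Cb = Cb := by
      refine min_eq_right ?_
      rw [← div_le_iff₀' hCa]
      calc Cb / Ca = c₀ ^ 2 := hc₀sq.symm
        _ ≤ Metric.infDist z0 ↑X ^ 2 := by nlinarith
    have h1 : w z0 * Cb ≤ |w z0| - w z0 * peval q z0 := by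
      have := htermpos z0 hz0 hw0.le
      rwa [hminCb] at this
    have h2 : |w z0| - w z0 * peval q z0 ≤ ∑ z ∈ Z, (|w z| - w z * peval q z) :=
      Finset.single_le_sum hterm0 hz0
    have : w z0 * Cb ≤ 2 * δ := by linarith
    rw [← le_div_iff₀ hCb] at this
    linarith
  refine ⟨?_, ?_, ?_⟩
  · -- near spikes
    rw [le_div_iff₀' hCa, Finset.mul_sum]
    refine le_trans (Finset.sum_le_sum (fun z hz => ?_)) hmain
    by_cases hcond : Metric.infDist z ↑X ≤ c₀ ∧ 0 < w z
    · rw [if_pos hcond]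
      obtain ⟨hdz, hwz⟩ := hcond
      have hminCa : min (Ca * Metric.infDist z ↑X ^ 2) Cb
          = Ca * Metric.infDist z ↑X ^ 2 := by
        refine min_eq_left ?_
        rw [← le_div_iff₀' hCa]
        calc Metric.infDist z ↑X ^ 2 ≤ c₀ ^ 2 := by
              nlinarith [Metric.infDist_nonneg (x := z) (s := (↑X : Set _))]
          _ = Cb / Ca := hc₀sq
      have := htermpos z hz hwz.le
      rw [hminCa] at this
      calc Ca * (w z * Metric.infDist z ↑X ^ 2)
          = w z * (Ca * Metric.infDist z ↑X ^ 2) := by ring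
        _ ≤ _ := this
    · rw [if_neg hcond, mul_zero]
      exact hterm0 z hz
  · -- far spikes
    rw [le_div_iff₀' hCb, Finset.mul_sum]
    refine le_trans (Finset.sum_le_sum (fun z hz => ?_)) hmain
    by_cases hcond : c₀ ≤ Metric.infDist z ↑X ∧ 0 < w z
    · rw [if_pos hcond]
      obtain ⟨hdz, hwz⟩ := hcond
      have hminCb : min (Ca * Metric.infDist z ↑X ^ 2) Cb = Cb := by
        refine min_eq_right ?_
        rw [← div_le_iff₀' hCa]
        calc Cb / Ca = c₀ ^ 2 := hc₀sq.symm
          _ ≤ Metric.infDist z ↑X ^ 2 := by nlinarith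
      have := htermpos z hz hwz.le
      rw [hminCb] at this
      calc Cb * w z = w z * Cb := by ring
        _ ≤ _ := this
    · rw [if_neg hcond, mul_zero]
      exact hterm0 z hz
  · -- negative spikes
    refine le_trans (Finset.sum_le_sum (fun z hz => ?_)) hmain
    by_cases hw : w z < 0
    · rw [if_pos hw]
      obtain ⟨h0, h1⟩ := hq01 z (hZK hz)
      nlinarith [abs_of_neg hw]
    · rw [if_neg hw]
      exact hterm0 z hz
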